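/- Let P = [d] be the totally ordered set on d elements and φ ∈ Hom([d],[n]). Consider subsets D ⊆ T_*(φ) \ Γφ. Then: (1) D is uniquely determined by its projection p₂(D) onto [n], i.e., if D, D' ⊆ T_*(φ) \ Γφ have the same projection onto [n] then D = D'; (2) the subsets of [n] occurring as p₂(D) for some D ⊆ T_*(φ) \ Γφ are exactly the subsets of {1, …, φ(d)−1}. -/
import Mathlib


variable {P : Type*} [PartialOrder P] [Fintype P]

/-- `T_*(φ) = {(p,i) | φ q ≤ i ≤ φ p for all q < p}`. -/
def Tstar {n : ℕ} (φ : P → Fin n) : Set (P × Fin n) :=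
  {x | x.2 ≤ φ x.1 ∧ ∀ q : P, q < x.1 → φ q ≤ x.2}

/-- The graph `Γφ = {(p, φ p) | p ∈ P}` of a map φ : P → [n]. -/
def graphOf {n : ℕ} (φ : P → Fin n) : Set (P × Fin n) :=
  {x | x.2 = φ x.1}

/-- Let P = [d] be totally ordered and φ : [d] → [n] isotone.  For subsets
D ⊆ T_*(φ) \ Γφ:  (1) D is uniquely determined by its projection p₂(D) onto [n];
(2) the sets occurring as p₂(D) are exactly the subsets of {1, …, φ(d) − 1}. -/
theorem stmt9 {d n : ℕ} (hd : 0 < d) (φ : Fin d → Fin n) (hφ : Monotone φ) :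
    (∀ D D' : Set (Fin d × Fin n), D ⊆ Tstar φ \ graphOf φ → D' ⊆ Tstar φ \ graphOf φ →
      Prod.snd '' D = Prod.snd '' D' → D = D') ∧
      (∀ E : Set (Fin n),
        (∃ D : Set (Fin d × Fin n), D ⊆ Tstar φ \ graphOf φ ∧ Prod.snd '' D = E) ↔
          ∀ j ∈ E, j < φ ⟨d - 1, by omega⟩) := by
  set L : Fin d := ⟨d - 1, by omega⟩ with hL
  have hmax : ∀ p : Fin d, p ≤ L := fun p => by
    have := p.isLt; exact Fin.le_def.mpr (by simp [hL]; omega)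
  have key : ∀ (p p' : Fin d) (j : Fin n),
      (p, j) ∈ Tstar φ \ graphOf φ → (p', j) ∈ Tstar φ \ graphOf φ → p = p' := by
    intro p p' j hp hp'
    by_contra hne
    rcases lt_or_gt_of_ne hne with h | h
    · exact hp.2 (le_antisymm hp.1.1 (hp'.1.2 p h))
    · exact hp'.2 (le_antisymm hp'.1.1 (hp.1.2 p' h))
  constructor
  · intro D D' hD hD' hproj
    ext ⟨p, j⟩
    constructor
    · intro hm
      have : j ∈ Prod.snd '' D' := hproj ▸ ⟨(p, j), hm, rfl⟩
      obtain ⟨⟨p', j'⟩, hm', hj⟩ := this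
      cases hj
      rwa [key p p' j' (hD hm) (hD' hm')]
    · intro hm
      have : j ∈ Prod.snd '' D := hproj.symm ▸ ⟨(p, j), hm, rfl⟩
      obtain ⟨⟨p', j'⟩, hm', hj⟩ := this
      cases hj
      rwa [key p p' j' (hD' hm) (hD hm')]
  · intro E
    constructor
    · rintro ⟨D, hD, rfl⟩ j ⟨⟨p, j'⟩, hm, rfl⟩
      have h := hD hm
      exact lt_of_lt_of_le (lt_of_le_of_ne h.1.1 h.2) (hφ (hmax p))
    · intro hE
      classical
      refine ⟨{x | x.2 ∈ E ∧ x.2 < φ x.1 ∧ ∀ q, q < x.1 → φ q ≤ x.2}, ?_, ?_⟩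
      · rintro ⟨p, j⟩ ⟨hjE, h1, h2⟩
        exact ⟨⟨le_of_lt h1, h2⟩, fun hg => absurd hg (ne_of_lt h1)⟩
      · ext j
        constructor
        · rintro ⟨⟨p, j'⟩, ⟨hjE, _, _⟩, rfl⟩; exact hjE
        · intro hj
          have hne : ({p : Fin d | j < φ p} : Set _).Nonempty := ⟨L, hE j hj⟩
          obtain ⟨p, hp, hmin⟩ := Set.exists_min_image _ id (Set.toFinite _) hne
          refine ⟨(p, j), ⟨hj, hp, fun q hq => ?_⟩, rfl⟩
          by_contra hqj
          push_neg at hqj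
          exact absurd (hmin q hqj) (not_le.mpr hq)
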